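/- Suppose q^λ ≠ 1 and let K = ⊕_{i=0}^N ker B_i ⊆ (ℂ^m)^{N+1}, L = {(h,…,h) : h ∈ ker(A_∞ − q^λ b_∞ 1_m)} with A_∞ = b_∞ B_∞. Let G_0 be the block matrix with first block row (1_m − B_0, B_1, …, B_N) and diagonal blocks (1_m − B_0) then q^λ 1_m repeated N times (zeros elsewhere except first row). Then: (a) dim(ker(1·1_{(N+1)m} − G_0) ∩ K) = dim ker(A_0 − 1_m) where A_0 = 1_m − B_0; (b) dim(ker(q^λ·1_{(N+1)m} − G_0) ∩ K) = Σ_{k=1}^N dim ker B_k; (c) for θ ∉ {1, q^λ}, ker(θ·1 − G_0) ∩ K = 0. -/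
import Mathlib


/-- Intersections of eigenspaces of `G_0` with `K = ⊕ ker B_i`: with `c = q^λ ≠ 1`,
(a) `dim(ker(1 − G_0) ∩ K) = dim ker(A_0 − 1_m)` (`A_0 = 1 − B_0`);
(b) `dim(ker(q^λ − G_0) ∩ K) = Σ_{k=1}^N dim ker B_k`;
(c) for `θ ∉ {1, q^λ}`, `ker(θ − G_0) ∩ K = 0`. -/
theorem qmc_G0_eigen_K (m N : ℕ) (c : ℂ) (hc : c ≠ 1)
    (Bl : Fin N → Matrix (Fin m) (Fin m) ℂ) (Binf : Matrix (Fin m) (Fin m) ℂ)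
    (B0 : Matrix (Fin m) (Fin m) ℂ) (hB0 : B0 = 1 - ∑ i, Bl i - Binf)
    (Bc : Fin (N + 1) → Matrix (Fin m) (Fin m) ℂ) (hBc : Bc = Fin.cons B0 Bl)
    (G0 : Matrix (Fin (N + 1) × Fin m) (Fin (N + 1) × Fin m) ℂ)
    (hG0 : ∀ (θ : ℂ) (v : Fin (N + 1) × Fin m → ℂ) (p : Fin (N + 1) × Fin m),
      ((θ • (1 : Matrix (Fin (N + 1) × Fin m) (Fin (N + 1) × Fin m) ℂ) - G0).mulVec v) p =
        if p.1 = 0 then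
          (∑ k, (Bc k).mulVec fun j => v (k, j)) p.2 + (θ - 1) * v p
        else (θ - c) * v p)
    (K : Submodule ℂ (Fin (N + 1) × Fin m → ℂ))
    (hK : K = ⨅ i : Fin (N + 1),
      Submodule.comap (LinearMap.funLeft ℂ ℂ fun j : Fin m => (i, j))
        (LinearMap.ker (Bc i).mulVecLin)) :
    Module.finrank ℂ
        ↥(LinearMap.ker (((1 : ℂ) • (1 : Matrix (Fin (N + 1) × Fin m) (Fin (N + 1) × Fin m) ℂ)
          - G0).mulVecLin) ⊓ K)
      = Module.finrank ℂ
        (LinearMap.ker (((1 : Matrix (Fin m) (Fin m) ℂ) - B0 - 1).mulVecLin)) ∧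
    Module.finrank ℂ
        ↥(LinearMap.ker ((c • (1 : Matrix (Fin (N + 1) × Fin m) (Fin (N + 1) × Fin m) ℂ)
          - G0).mulVecLin) ⊓ K)
      = ∑ k : Fin N, Module.finrank ℂ (LinearMap.ker (Bl k).mulVecLin) ∧
    ∀ θ : ℂ, θ ≠ 1 → θ ≠ c →
      LinearMap.ker ((θ • (1 : Matrix (Fin (N + 1) × Fin m) (Fin (N + 1) × Fin m) ℂ)
        - G0).mulVecLin) ⊓ K = ⊥ := by

  have hker : ∀ (θ : ℂ) (v : Fin (N + 1) × Fin m → ℂ),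
      v ∈ LinearMap.ker ((θ • (1 : Matrix (Fin (N + 1) × Fin m) (Fin (N + 1) × Fin m) ℂ)
        - G0).mulVecLin) ↔
      ∀ p : Fin (N + 1) × Fin m,
        (if p.1 = 0 then (∑ k, (Bc k).mulVec fun j => v (k, j)) p.2 + (θ - 1) * v p
         else (θ - c) * v p) = 0 := by
    intro θ v
    simp only [LinearMap.mem_ker, Matrix.mulVecLin_apply, funext_iff, Pi.zero_apply, hG0]
  have hKmem : ∀ v : Fin (N + 1) × Fin m → ℂ,
      v ∈ K ↔ ∀ i : Fin (N + 1), (Bc i).mulVec (fun j => v (i, j)) = 0 := by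
    intro v
    simp only [hK, Submodule.mem_iInf, Submodule.mem_comap, LinearMap.mem_ker,
      Matrix.mulVecLin_apply, LinearMap.funLeft_apply]
    exact Iff.rfl
  have hsum0 : ∀ v : Fin (N + 1) × Fin m → ℂ,
      (∀ i : Fin (N + 1), (Bc i).mulVec (fun j => v (i, j)) = 0) →
      (∑ k, (Bc k).mulVec fun j => v (k, j)) = 0 := by
    intro v h
    rw [Finset.sum_eq_zero]
    intro k _
    exact h k
  have hBc0 : Bc 0 = B0 := by rw [hBc]; exact Fin.cons_zero _ _
  have hBcs : ∀ k : Fin N, Bc k.succ = Bl k := by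
    intro k; rw [hBc]; exact Fin.cons_succ _ _ _
  refine ⟨?_, ?_, ?_⟩
  · -- part (a): θ = 1
    have hA : ((1 : Matrix (Fin m) (Fin m) ℂ) - B0 - 1) = -B0 := by abel
    have hkn : LinearMap.ker (((1 : Matrix (Fin m) (Fin m) ℂ) - B0 - 1).mulVecLin)
        = LinearMap.ker (B0.mulVecLin) := by
      rw [hA]; ext w
      simp [LinearMap.mem_ker, Matrix.mulVecLin_apply, Matrix.neg_mulVec, neg_eq_zero]
    rw [hkn]
    have hv0 : ∀ v ∈ LinearMap.ker (((1 : ℂ) • (1 : Matrix (Fin (N + 1) × Fin m)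
          (Fin (N + 1) × Fin m) ℂ) - G0).mulVecLin) ⊓ K,
        ∀ p : Fin (N + 1) × Fin m, p.1 ≠ 0 → v p = 0 := by
      intro v hv p hp
      rw [Submodule.mem_inf, hker, hKmem] at hv
      have h := hv.1 p
      rw [if_neg hp] at h
      have h1c : (1 : ℂ) - c ≠ 0 := sub_ne_zero_of_ne (Ne.symm hc)
      exact (mul_eq_zero.mp h).resolve_left h1c
    refine LinearEquiv.finrank_eq
      (⟨⟨⟨fun v => ⟨fun j => v.1 (0, j), ?_⟩, ?_⟩, ?_⟩,
        fun w => ⟨fun p => if p.1 = 0 then w.1 p.2 else 0, ?_⟩, ?_, ?_⟩ :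
        ↥(LinearMap.ker (((1 : ℂ) • (1 : Matrix (Fin (N + 1) × Fin m)
          (Fin (N + 1) × Fin m) ℂ) - G0).mulVecLin) ⊓ K) ≃ₗ[ℂ]
        ↥(LinearMap.ker (B0.mulVecLin)))
    · have hv := v.2
      rw [Submodule.mem_inf, hker, hKmem] at hv
      have h0 := hv.2 0
      rw [hBc0] at h0
      rw [LinearMap.mem_ker, Matrix.mulVecLin_apply]
      exact h0
    · intro a b; rfl
    · intro r a; rfl
    · have hw : B0.mulVec w.1 = 0 := by
        have h := LinearMap.mem_ker.mp w.2
        rwa [Matrix.mulVecLin_apply] at h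
      have hKi : ∀ i : Fin (N + 1),
          (Bc i).mulVec (fun j => if i = 0 then w.1 j else 0) = 0 := by
        intro i
        rcases eq_or_ne i 0 with h | h
        · subst h
          simp only [if_pos rfl]
          rw [hBc0]
          exact hw
        · simp only [if_neg h]
          exact Matrix.mulVec_zero (Bc i)
      rw [Submodule.mem_inf, hker, hKmem]
      constructor
      · intro p
        rcases eq_or_ne p.1 0 with h | h
        · rw [if_pos h]
          have hs : (∑ k : Fin (N + 1), (Bc k).mulVec
              fun j => if ((k, j) : Fin (N + 1) × Fin m).1 = 0 then w.1 (k, j).2 else 0) = 0 :=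
            Finset.sum_eq_zero fun k _ => hKi k
          rw [hs]
          simp [h]
        · rw [if_neg h]
          simp [h]
      · exact fun i => hKi i
    · intro v
      ext p
      obtain ⟨i, j⟩ := p
      rcases eq_or_ne i 0 with h | h
      · subst h; simp
      · simp only [h, if_neg h]
        exact (hv0 v.1 v.2 (i, j) h).symm
    · intro w
      ext j
      simp
  · -- part (b): θ = c
    have hv00 : ∀ v ∈ LinearMap.ker ((c • (1 : Matrix (Fin (N + 1) × Fin m)
          (Fin (N + 1) × Fin m) ℂ) - G0).mulVecLin) ⊓ K,
        ∀ p : Fin (N + 1) × Fin m, p.1 = 0 → v p = 0 := by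
      intro v hv p hp
      rw [Submodule.mem_inf, hker, hKmem] at hv
      have h := hv.1 p
      rw [if_pos hp, hsum0 _ hv.2] at h
      have hc1 : c - 1 ≠ 0 := sub_ne_zero_of_ne hc
      have h' : (c - 1) * v p = 0 := by simpa using h
      exact (mul_eq_zero.mp h').resolve_left hc1
    have e : ↥(LinearMap.ker ((c • (1 : Matrix (Fin (N + 1) × Fin m)
          (Fin (N + 1) × Fin m) ℂ) - G0).mulVecLin) ⊓ K) ≃ₗ[ℂ]
        ((k : Fin N) → ↥(LinearMap.ker (Bl k).mulVecLin)) := by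
      refine ⟨⟨⟨fun v k => ⟨fun j => v.1 (k.succ, j), ?_⟩, ?_⟩, ?_⟩,
        fun w => ⟨fun p => if h : p.1 = 0 then 0 else (w (p.1.pred h)).1 p.2, ?_⟩, ?_, ?_⟩
      · have hv := v.2
        rw [Submodule.mem_inf, hker, hKmem] at hv
        have h0 := hv.2 k.succ
        rw [hBcs] at h0
        rw [LinearMap.mem_ker, Matrix.mulVecLin_apply]
        exact h0
      · intro a b; rfl
      · intro r a; rfl
      · have hKi : ∀ i : Fin (N + 1),
            (Bc i).mulVec (fun j => if h : i = 0 then 0 else (w (i.pred h)).1 j) = 0 := by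
          intro i
          induction i using Fin.cases with
          | zero =>
            simp only [dif_pos rfl]
            exact Matrix.mulVec_zero (Bc 0)
          | succ k =>
            simp only [dif_neg (Fin.succ_ne_zero k), Fin.pred_succ]
            rw [hBcs]
            have h := LinearMap.mem_ker.mp (w k).2
            rwa [Matrix.mulVecLin_apply] at h
        rw [Submodule.mem_inf, hker, hKmem]
        constructor
        · intro p
          rcases eq_or_ne p.1 0 with h | h
          · rw [if_pos h]
            have hs : (∑ k : Fin (N + 1), (Bc k).mulVec
                fun j => if hh : ((k, j) : Fin (N + 1) × Fin m).1 = 0 then 0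
                  else (w (((k, j) : Fin (N + 1) × Fin m).1.pred hh)).1 (k, j).2) = 0 :=
              Finset.sum_eq_zero fun k _ => hKi k
            rw [hs]
            simp [h]
          · rw [if_neg h]
            simp
        · exact fun i => hKi i
      · intro v
        ext p
        obtain ⟨i, j⟩ := p
        rcases eq_or_ne i 0 with h | h
        · subst h
          simp only [dif_pos rfl]
          exact (hv00 v.1 v.2 (0, j) rfl).symm
        · show (if hh : i = 0 then (0 : ℂ) else v.1 ((i.pred hh).succ, j)) = v.1 (i, j)
          rw [dif_neg h, Fin.succ_pred]
      · intro w
        funext k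
        ext j
        show (if hh : (k.succ : Fin (N + 1)) = 0 then (0 : ℂ)
            else (w (k.succ.pred hh)).1 j) = (w k).1 j
        rw [dif_neg (Fin.succ_ne_zero k), Fin.pred_succ]
    rw [e.finrank_eq]
    exact Module.finrank_pi_fintype ℂ
  · -- part (c)
    intro θ hθ1 hθc
    rw [eq_bot_iff]
    intro v hv
    rw [Submodule.mem_inf, hker, hKmem] at hv
    rw [Submodule.mem_bot]
    funext p
    have h := hv.1 p
    rcases eq_or_ne p.1 0 with hp | hp
    · rw [if_pos hp, hsum0 _ hv.2] at h
      have h' : (θ - 1) * v p = 0 := by simpa using h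
      simpa using (mul_eq_zero.mp h').resolve_left (sub_ne_zero_of_ne hθ1)
    · rw [if_neg hp] at h
      simpa using (mul_eq_zero.mp h).resolve_left (sub_ne_zero_of_ne hθc)
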